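/- For every positive integer n, Kinkelin's G-function satisfies G̃(n+1) = 1^1 · 2^2 · ⋯ · n^n = ∏_{k=1}^n k^k. -/

import Mathlib

open Real MeasureTheory Set Filter Topology intervalIntegral

/-- The log-Gamma function. -/
noncomputable def lG (t : ℝ) : ℝ := Real.log (Real.Gamma t)

lemma intInt_log01 : IntervalIntegrable Real.log volume 0 1 := by
  rw [intervalIntegrable_iff_integrableOn_Ioo_of_le zero_le_one]
  have hg : IntegrableOn (fun t : ℝ => 2 * t ^ (-(1/2) : ℝ)) (Ioo 0 1) volume :=
    ((integrableOn_Ioo_rpow_iff zero_lt_one).mpr (by norm_num)).const_mul 2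
  refine hg.mono' Real.measurable_log.aestronglyMeasurable ?_
  filter_upwards [ae_restrict_mem measurableSet_Ioo] with t ht
  have h0 : 0 < t := ht.1
  rw [Real.norm_eq_abs, abs_of_nonpos (Real.log_nonpos h0.le ht.2.le)]
  have key : Real.log (t ^ (-(1/2):ℝ)) ≤ t ^ (-(1/2):ℝ) - 1 :=
    Real.log_le_sub_one_of_pos (Real.rpow_pos_of_pos h0 _)
  rw [Real.log_rpow h0] at key
  nlinarith [Real.rpow_pos_of_pos h0 (-(1/2):ℝ)]

lemma integral_log01 : ∫ t in (0:ℝ)..1, Real.log t = -1 := by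
  have hF : ContinuousOn (fun b => ∫ x in (1:ℝ)..b, Real.log x) (uIcc (0:ℝ) 1) :=
    continuousOn_primitive_interval' intInt_log01 (by simp)
  have h0 : (0:ℝ) ∈ uIcc (0:ℝ) 1 := by simp
  have hmem : Ioo (0:ℝ) 1 ⊆ uIcc (0:ℝ) 1 := by
    rw [uIcc_of_le zero_le_one]; exact Ioo_subset_Icc_self
  have h1 : Tendsto (fun b => ∫ x in (1:ℝ)..b, Real.log x) (𝓝[Ioo (0:ℝ) 1] 0)
      (𝓝 (∫ x in (1:ℝ)..(0:ℝ), Real.log x)) :=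
    ((hF 0 h0).mono hmem)
  haveI : (𝓝[Ioo (0:ℝ) 1] 0).NeBot := by
    refine mem_closure_iff_nhdsWithin_neBot.mp ?_
    rw [closure_Ioo one_ne_zero.symm]
    exact ⟨le_rfl, zero_le_one⟩
  have h2 : Tendsto (fun b => ∫ x in (1:ℝ)..b, Real.log x) (𝓝[Ioo (0:ℝ) 1] 0) (𝓝 1) := by
    have hxl : Tendsto (fun b : ℝ => Real.log b * b - b + 1) (𝓝[Ioo (0:ℝ) 1] 0) (𝓝 1) := by
      have : Tendsto (fun x : ℝ => Real.log x * x ^ (1:ℝ)) (𝓝[Ioo (0:ℝ) 1] 0) (𝓝 0) :=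
        (tendsto_log_mul_rpow_nhdsGT_zero zero_lt_one).mono_left
          (nhdsWithin_mono 0 (Ioo_subset_Ioi_self : Ioo (0:ℝ) 1 ⊆ Ioi 0))
      have h' : Tendsto (fun b : ℝ => Real.log b * b) (𝓝[Ioo (0:ℝ) 1] 0) (𝓝 0) := by
        refine this.congr' ?_
        filter_upwards [self_mem_nhdsWithin] with b hb
        rw [Real.rpow_one]
      have h2' : Tendsto (fun b : ℝ => Real.log b * b - b + 1) (𝓝[Ioo (0:ℝ) 1] 0)
          (𝓝 ((0:ℝ) - 0 + 1)) :=
        (h'.sub (tendsto_nhdsWithin_of_tendsto_nhds tendsto_id)).add tendsto_const_nhds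
      simpa using h2'
    refine hxl.congr' ?_
    filter_upwards [self_mem_nhdsWithin] with b hb
    rw [integral_log]
    simp only [Real.log_one]
    ring
  have := tendsto_nhds_unique h1 h2
  rwa [integral_symm, neg_eq_iff_eq_neg] at this

lemma contOn_lG {s : Set ℝ} (hs : ∀ t ∈ s, 0 < t) : ContinuousOn lG s := by
  intro t ht
  have h0 : 0 < t := hs t ht
  refine (ContinuousAt.continuousWithinAt ?_)
  refine ((Real.differentiableAt_Gamma fun m => ?_).continuousAt.log
    (Real.Gamma_pos_of_pos h0).ne')
  have : (0:ℝ) < t := h0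
  intro h
  rw [h] at this
  have : (0:ℝ) ≤ (m:ℝ) := Nat.cast_nonneg m
  linarith

lemma iG01 : IntervalIntegrable lG volume 0 1 := by
  rw [intervalIntegrable_iff_integrableOn_Ioo_of_le zero_le_one]
  have h1 : IntegrableOn (fun t => Real.log (Real.Gamma (t+1)) - Real.log t)
      (Ioo (0:ℝ) 1) volume := by
    apply Integrable.sub
    · have hc : ContinuousOn (fun t : ℝ => Real.log (Real.Gamma (t+1))) (Icc 0 1) := by
        have := (contOn_lG (s := Icc (1:ℝ) 2) (fun t ht => by linarith [ht.1]))
        exact this.comp (by fun_prop) (fun t ht => ⟨by linarith [ht.1], by linarith [ht.2]⟩)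
      exact (hc.integrableOn_Icc).mono_set Ioo_subset_Icc_self
    · exact (intervalIntegrable_iff_integrableOn_Ioo_of_le zero_le_one).mp intInt_log01
  refine h1.congr_fun (fun t ht => ?_) measurableSet_Ioo
  have h0 : (0:ℝ) < t := ht.1
  dsimp only
  rw [Real.Gamma_add_one h0.ne', Real.log_mul h0.ne' (Real.Gamma_pos_of_pos h0).ne']
  simp [lG]

lemma iG0 (b : ℝ) (hb : 0 ≤ b) : IntervalIntegrable lG volume 0 b := by
  rcases le_total b 1 with h | h
  · exact iG01.mono_set (by rw [uIcc_of_le hb, uIcc_of_le zero_le_one]; exact Icc_subset_Icc_right h)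
  · refine iG01.trans ?_
    exact (contOn_lG (fun t ht => by rw [uIcc_of_le h] at ht; linarith [ht.1])).intervalIntegrable

lemma iGab (a b : ℝ) (ha : 0 ≤ a) (hb : 0 ≤ b) : IntervalIntegrable lG volume a b :=
  (iG0 a ha).symm.trans (iG0 b hb)

lemma raabe : ∫ t in (0:ℝ)..1, lG t = Real.log (2*π) / 2 := by
  set I := ∫ t in (0:ℝ)..1, lG t with hI
  have iA : IntervalIntegrable lG volume 0 (1/2) := iGab _ _ le_rfl (by norm_num)
  have iB' : IntervalIntegrable (fun t => lG (t + 1/2)) volume 0 (1/2) := by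
    have := (iGab (1/2) 1 (by norm_num) zero_le_one).comp_add_right (1/2)
    norm_num at this
    exact this
  have iC : IntervalIntegrable (fun t => lG (2*t)) volume 0 (1/2) := by
    have := (iGab 0 1 le_rfl zero_le_one).comp_mul_left (c := 2)
    norm_num at this
    exact this
  have iD : IntervalIntegrable
      (fun t : ℝ => (1-2*t)*Real.log 2 + Real.log π / 2) volume 0 (1/2) :=
    (Continuous.intervalIntegrable (by continuity) _ _)
  have hsplit : (∫ t in (0:ℝ)..(1/2:ℝ), lG t) + ∫ t in (1/2:ℝ)..1, lG t = I :=
    integral_add_adjacent_intervals iA (iGab _ _ (by norm_num) zero_le_one)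
  have hB : ∫ t in (1/2:ℝ)..1, lG t = ∫ t in (0:ℝ)..(1/2:ℝ), lG (t + 1/2) := by
    rw [intervalIntegral.integral_comp_add_right]
    norm_num
  have hdup : ∫ t in (0:ℝ)..(1/2:ℝ), (lG t + lG (t+1/2)) =
      ∫ t in (0:ℝ)..(1/2:ℝ), (lG (2*t) + ((1-2*t)*Real.log 2 + Real.log π / 2)) := by
    apply intervalIntegral.integral_congr_ae
    refine Eventually.of_forall fun t ht => ?_
    rw [uIoc_of_le (by norm_num : (0:ℝ) ≤ 1/2)] at ht
    have h0 : 0 < t := ht.1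
    have h2 := Real.Gamma_mul_Gamma_add_half t
    have p1 : 0 < Real.Gamma t := Real.Gamma_pos_of_pos h0
    have p2 : 0 < Real.Gamma (t+1/2) := Real.Gamma_pos_of_pos (by linarith)
    have p3 : 0 < Real.Gamma (2*t) := Real.Gamma_pos_of_pos (by linarith)
    have p4 : (0:ℝ) < (2:ℝ)^((1:ℝ)-2*t) := Real.rpow_pos_of_pos two_pos _
    have p5 : 0 < Real.sqrt π := Real.sqrt_pos.mpr Real.pi_pos
    have hl := congrArg Real.log h2
    rw [Real.log_mul p1.ne' p2.ne', Real.log_mul (mul_pos p3 p4).ne' p5.ne',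
        Real.log_mul p3.ne' p4.ne', Real.log_rpow two_pos,
        Real.log_sqrt Real.pi_pos.le] at hl
    simp only [lG]
    linarith
  have hhalf : ∫ t in (0:ℝ)..(1/2:ℝ), lG (2*t) = I/2 := by
    rw [intervalIntegral.integral_comp_mul_left _ two_ne_zero]
    norm_num [hI]
    ring
  have hlin : ∫ t in (0:ℝ)..(1/2:ℝ), ((1-2*t)*Real.log 2 + Real.log π / 2)
      = Real.log 2 / 4 + Real.log π / 4 := by
    have : (∫ t in (0:ℝ)..(1/2:ℝ), ((1-2*t)*Real.log 2 + Real.log π / 2))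
        = ∫ t in (0:ℝ)..(1/2:ℝ), ((Real.log 2 + Real.log π / 2) - (2*Real.log 2)*t) := by
      apply intervalIntegral.integral_congr
      intro t _
      ring
    rw [this, intervalIntegral.integral_sub (Continuous.intervalIntegrable (by continuity) _ _)
        (Continuous.intervalIntegrable (by continuity) _ _),
        intervalIntegral.integral_const, intervalIntegral.integral_const_mul, integral_id]
    norm_num
    ring
  have key : I = I/2 + (Real.log 2 / 4 + Real.log π / 4) := by
    conv_lhs => rw [← hsplit, hB]
    rw [← intervalIntegral.integral_add iA iB', hdup,
        intervalIntegral.integral_add iC iD, hhalf, hlin]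
  have hlog : Real.log (2*π) = Real.log 2 + Real.log π :=
    Real.log_mul two_ne_zero Real.pi_pos.ne'
  rw [hlog]
  linarith

lemma ilog_nat (n : ℕ) : IntervalIntegrable Real.log volume (n:ℝ) ((n:ℝ)+1) := by
  cases n with
  | zero => simpa using intInt_log01
  | succ m =>
    apply intervalIntegrable_log
    rw [uIcc_of_le (by linarith)]
    intro h
    have : (0:ℝ) < (m:ℝ) + 1 := by positivity
    have h1 := h.1
    push_cast at h1
    linarith

lemma integral_log_nat (n : ℕ) : ∫ t in (n:ℝ)..((n:ℝ)+1), Real.log t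
    = ((n:ℝ)+1) * Real.log ((n:ℝ)+1) - (n:ℝ) * Real.log (n:ℝ) - 1 := by
  cases n with
  | zero => simpa using integral_log01
  | succ m =>
    have h0 : (0:ℝ) < (m:ℝ) + 1 := by positivity
    rw [integral_log]
    push_cast
    ring

lemma lG_int (k : ℕ) : ∫ t in (k:ℝ)..((k:ℝ)+1), lG t
    = Real.log (2*π)/2 + (k:ℝ) * Real.log (k:ℝ) - (k:ℝ) := by
  induction k with
  | zero => simpa using raabe
  | succ n ih =>
    have h1 : ∫ t in ((n+1:ℕ):ℝ)..(((n+1:ℕ):ℝ)+1), lG t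
        = ∫ t in (n:ℝ)..((n:ℝ)+1), lG (t+1) := by
      rw [intervalIntegral.integral_comp_add_right]
      push_cast
      norm_num
    have h2 : ∫ t in (n:ℝ)..((n:ℝ)+1), lG (t+1)
        = (∫ t in (n:ℝ)..((n:ℝ)+1), lG t) + ∫ t in (n:ℝ)..((n:ℝ)+1), Real.log t := by
      rw [← intervalIntegral.integral_add
        (iGab _ _ (Nat.cast_nonneg n) (by positivity)) (ilog_nat n)]
      apply intervalIntegral.integral_congr_ae
      refine Eventually.of_forall fun t ht => ?_
      rw [uIoc_of_le (by linarith : (n:ℝ) ≤ (n:ℝ)+1)] at ht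
      have h0 : (0:ℝ) < t := lt_of_le_of_lt (Nat.cast_nonneg n) ht.1
      simp only [lG]
      rw [Real.Gamma_add_one h0.ne',
        Real.log_mul h0.ne' (Real.Gamma_pos_of_pos h0).ne', add_comm]
    rw [h1, h2, ih, integral_log_nat]
    push_cast
    ring

lemma lG_int0 (n : ℕ) : ∫ t in (0:ℝ)..(n:ℝ), lG t
    = (n:ℝ) * Real.log (2*π)/2
      + ∑ k ∈ Finset.range n, ((k:ℝ) * Real.log (k:ℝ) - (k:ℝ)) := by
  induction n with
  | zero => simp
  | succ m ih =>
    have hsplit : (∫ t in (0:ℝ)..(m:ℝ), lG t) + ∫ t in (m:ℝ)..((m:ℝ)+1), lG t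
        = ∫ t in (0:ℝ)..((m:ℝ)+1), lG t :=
      integral_add_adjacent_intervals (iG0 _ (Nat.cast_nonneg m))
        (iGab _ _ (Nat.cast_nonneg m) (by positivity))
    have hcast : ((m+1:ℕ):ℝ) = (m:ℝ)+1 := by push_cast; ring
    rw [hcast, ← hsplit, ih, lG_int, Finset.sum_range_succ]
    push_cast
    ring

lemma sum_range_cast (n : ℕ) : (∑ k ∈ Finset.range (n+1), (k:ℝ)) = (n:ℝ)*((n:ℝ)+1)/2 := by
  induction n with
  | zero => simp
  | succ m ih => rw [Finset.sum_range_succ, ih]; push_cast; ring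

/-- Kinkelin's G-function:
`G̃(x) = exp(∫₀^x log Γ(t) dt + x(x-1)/2 - (x/2) log(2π))`. -/
noncomputable def kinkelinG (x : ℝ) : ℝ :=
  Real.exp ((∫ t in (0:ℝ)..x, Real.log (Real.Gamma t)) + x * (x - 1) / 2 -
    x / 2 * Real.log (2 * π))

/-- For every positive integer `n`, `G̃(n+1) = 1^1 · 2^2 ⋯ n^n`. -/
theorem kinkelinG_nat (n : ℕ) (hn : 0 < n) :
    kinkelinG (n + 1) = ∏ k ∈ Finset.Icc 1 n, (k : ℝ) ^ k := by
  have hInt : (∫ t in (0:ℝ)..((n:ℝ)+1), Real.log (Real.Gamma t))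
      = ((n:ℝ)+1) * Real.log (2*π)/2
        + ∑ k ∈ Finset.range (n+1), ((k:ℝ) * Real.log (k:ℝ) - (k:ℝ)) := by
    have := lG_int0 (n+1)
    push_cast at this
    simpa [lG] using this
  have hT := sum_range_cast n
  have hexp : kinkelinG ((n:ℝ) + 1)
      = Real.exp (∑ k ∈ Finset.range (n+1), (k:ℝ) * Real.log (k:ℝ)) := by
    rw [kinkelinG, hInt, Finset.sum_sub_distrib, hT]
    congr 1
    ring
  rw [hexp, Real.exp_sum]
  have hprod : ∀ k ∈ Finset.range (n+1),
      Real.exp ((k:ℝ) * Real.log (k:ℝ)) = (k:ℝ)^k := by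
    intro k _
    cases k with
    | zero => simp
    | succ m =>
      rw [Real.exp_nat_mul, Real.exp_log (by positivity)]
  rw [Finset.prod_congr rfl hprod]
  have hset : Finset.range (n+1) = insert 0 (Finset.Icc 1 n) := by
    ext x
    simp [Finset.mem_range, Finset.mem_Icc, Nat.lt_succ_iff]
    omega
  rw [hset, Finset.prod_insert (by simp)]
  simp
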